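/- Define b_m(α) = (1/m)·∫_{α−1}^{α}(x + 1/2 − α)·∏_{k=0}^{m−1}(k+x) dx. Then for every real α ≥ 0 and integer m ≥ 1, b_m(α + 1/2) = (1/m)·∫_0^{1/2} u·(∏_{k=0}^{m−1}(k+α+u) − ∏_{k=0}^{m−1}(k+α−u)) du; consequently b_m(α + 1/2) > 0 for all α > 0 and m ≥ 1. -/

import Mathlib

noncomputable def binetB (m : ℕ) (α : ℝ) : ℝ :=
  (1 / (m : ℝ)) * ∫ x in (α - 1)..α, (x + 1/2 - α) * ∏ k ∈ Finset.range m, ((k : ℝ) + x)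

lemma binet_prod_lt_aux (m : ℕ) (hm : 1 ≤ m) (α u : ℝ) (hα : 0 < α) (hu : 0 < u)
    (hu2 : u < 1/2) :
    ∏ k ∈ Finset.range m, ((k : ℝ) + α - u) < ∏ k ∈ Finset.range m, ((k : ℝ) + α + u) := by
  rcases le_or_gt (α - u) 0 with h | h
  · have hpos : 0 < ∏ k ∈ Finset.range m, ((k : ℝ) + α + u) :=
      Finset.prod_pos fun k _ => by positivity
    refine lt_of_le_of_lt ?_ hpos
    obtain ⟨n, rfl⟩ : ∃ n, m = n + 1 := ⟨m - 1, (Nat.succ_pred_eq_of_pos hm).symm⟩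
    rw [Finset.prod_range_succ']
    apply mul_nonpos_of_nonneg_of_nonpos
    · apply Finset.prod_nonneg
      intro k _
      have hk : (0:ℝ) ≤ (k:ℝ) := Nat.cast_nonneg k
      push_cast
      linarith
    · simpa using h
  · apply Finset.prod_lt_prod_of_nonempty
    · intro k _
      have hk : (0:ℝ) ≤ (k:ℝ) := Nat.cast_nonneg k
      linarith
    · intro k _
      have hk : (0:ℝ) ≤ (k:ℝ) := Nat.cast_nonneg k
      linarith
    · exact Finset.nonempty_range_iff.mpr (by omega)

theorem binetB_half_shift (m : ℕ) (hm : 1 ≤ m) (α : ℝ) (hα : 0 ≤ α) :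
    binetB m (α + 1/2) =
      (1 / (m : ℝ)) * ∫ u in (0:ℝ)..(1/2),
        u * ((∏ k ∈ Finset.range m, ((k : ℝ) + α + u)) -
             ∏ k ∈ Finset.range m, ((k : ℝ) + α - u)) ∧
    (0 < α → 0 < binetB m (α + 1/2)) := by
  have hm0 : (0:ℝ) < m := by exact_mod_cast hm
  set P : ℝ → ℝ := fun x => ∏ k ∈ Finset.range m, ((k : ℝ) + x) with hP
  have hPc : Continuous P := by
    apply continuous_finset_prod
    intro k _
    fun_prop
  have hcongr1 : ∀ u : ℝ, P (α + u) = ∏ k ∈ Finset.range m, ((k : ℝ) + α + u) := fun u =>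
    Finset.prod_congr rfl fun k _ => (add_assoc _ _ _).symm
  have hcongr2 : ∀ u : ℝ, P (α - u) = ∏ k ∈ Finset.range m, ((k : ℝ) + α - u) := fun u =>
    Finset.prod_congr rfl fun k _ => (add_sub_assoc _ _ _).symm
  have hiplus : IntervalIntegrable (fun u : ℝ => u * P (α + u)) MeasureTheory.volume
      (-(1/2)) 0 := by
    apply Continuous.intervalIntegrable
    exact continuous_id.mul (hPc.comp (by fun_prop))
  have hiplus2 : IntervalIntegrable (fun u : ℝ => u * P (α + u)) MeasureTheory.volume
      0 (1/2) := by
    apply Continuous.intervalIntegrable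
    exact continuous_id.mul (hPc.comp (by fun_prop))
  have himinus : IntervalIntegrable (fun u : ℝ => (-u) * P (α - u)) MeasureTheory.volume
      0 (1/2) := by
    apply Continuous.intervalIntegrable
    exact continuous_neg.mul (hPc.comp (by fun_prop))
  have key : (∫ x in (α + 1/2 - 1)..(α + 1/2), (x + 1/2 - (α + 1/2)) * P x)
      = ∫ u in (0:ℝ)..(1/2), u * (P (α + u) - P (α - u)) := by
    have h1 : (∫ u in (-(1/2):ℝ)..(1/2), u * P (α + u))
        = ∫ x in (α + 1/2 - 1)..(α + 1/2), (x + 1/2 - (α + 1/2)) * P x := by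
      have h := intervalIntegral.integral_comp_add_right (a := (-(1/2):ℝ)) (b := 1/2)
        (fun x => (x + 1/2 - (α + 1/2)) * P x) α
      rw [show (-(1/2):ℝ) + α = α + 1/2 - 1 by ring, show (1/2:ℝ) + α = α + 1/2 by ring] at h
      rw [← h]
      apply intervalIntegral.integral_congr
      intro u _
      simp only
      rw [add_comm α u]
      ring_nf
    have h2 : (∫ u in (-(1/2):ℝ)..(1/2), u * P (α + u)) =
        (∫ u in (-(1/2):ℝ)..0, u * P (α + u)) + ∫ u in (0:ℝ)..(1/2), u * P (α + u) :=
      (intervalIntegral.integral_add_adjacent_intervals hiplus hiplus2).symm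
    have h3 : (∫ u in (-(1/2):ℝ)..0, u * P (α + u))
        = ∫ u in (0:ℝ)..(1/2), (-u) * P (α - u) := by
      have h := intervalIntegral.integral_comp_neg (a := (0:ℝ)) (b := 1/2)
        (fun u => u * P (α + u))
      simp only [neg_zero] at h
      rw [← h]
      apply intervalIntegral.integral_congr
      intro u _
      simp only
      rw [show α + -u = α - u by ring]
    have h4 : (∫ u in (0:ℝ)..(1/2), u * (P (α + u) - P (α - u)))
        = (∫ u in (0:ℝ)..(1/2), (-u) * P (α - u)) + ∫ u in (0:ℝ)..(1/2), u * P (α + u) := by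
      rw [← intervalIntegral.integral_add himinus hiplus2]
      apply intervalIntegral.integral_congr
      intro u _
      ring
    rw [← h1, h2, h3, h4]
  have hfirst : binetB m (α + 1/2) =
      (1 / (m : ℝ)) * ∫ u in (0:ℝ)..(1/2),
        u * ((∏ k ∈ Finset.range m, ((k : ℝ) + α + u)) -
             ∏ k ∈ Finset.range m, ((k : ℝ) + α - u)) := by
    unfold binetB
    rw [key]
    congr 1
    apply intervalIntegral.integral_congr
    intro u _
    show u * (P (α + u) - P (α - u)) = _
    rw [hcongr1, hcongr2]
  refine ⟨hfirst, fun hα0 => ?_⟩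
  rw [hfirst]
  apply mul_pos (by positivity)
  apply intervalIntegral.intervalIntegral_pos_of_pos_on
  · apply Continuous.intervalIntegrable
    apply continuous_id.mul
    apply Continuous.sub <;> exact continuous_finset_prod _ fun k _ => by fun_prop
  · intro u hu
    exact mul_pos hu.1
      (sub_pos.mpr (binet_prod_lt_aux m hm α u hα0 hu.1 hu.2))
  · norm_num
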